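/- Let J ⊆ ℝ be an open interval and let g : (0,1) × J → ℝ be twice continuously differentiable with ∂_y g(t,y) > 0 for all (t,y) ∈ (0,1) × J, satisfying ∂_t g(t,y) + ∂_{yy}g(t,y) / (2 (∂_y g(t,y))²) = 0. Let w : (0,1) × ℝ → ℝ be twice continuously differentiable such that w(t, g(t,y)) = y for all (t,y) ∈ (0,1) × J (i.e. w(t,·) is a left inverse of g(t,·)). Then for every (t,y) ∈ (0,1) × J, at the point x = g(t,y) the function w satisfies the backward heat equation ∂_t w(t,x) + (1/2) ∂_{xx}w(t,x) = 0. -/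

import Mathlib

open Set

/-- Key chain-rule-in-time lemma via the mean value theorem: if `w` has partial time
derivative `wt` on `(0,1) × ℝ`, continuous at `(t,x)`, and `G` is continuous at `t` with
`G t = x`, then `τ ↦ w τ (G τ) - w t (G τ)` has derivative `wt t x` at `t`. -/
lemma aux_t_deriv (w wt : ℝ → ℝ → ℝ) (t x : ℝ) (ht : t ∈ Set.Ioo (0:ℝ) 1)
    (hwt : ∀ τ ∈ Set.Ioo (0:ℝ) 1, ∀ x' : ℝ, HasDerivAt (fun σ => w σ x') (wt τ x') τ)
    (hwtc : ContinuousAt (fun p : ℝ × ℝ => wt p.1 p.2) (t, x))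
    (G : ℝ → ℝ) (hG : ContinuousAt G t) (hGt : G t = x) :
    HasDerivAt (fun τ => w τ (G τ) - w t (G τ)) (wt t x) t := by
  rw [hasDerivAt_iff_isLittleO, Asymptotics.isLittleO_iff]
  intro c hc
  have h1 : {p : ℝ × ℝ | ‖wt p.1 p.2 - wt t x‖ ≤ c} ∈ nhds (t, x) := by
    filter_upwards [hwtc (Metric.closedBall_mem_nhds (wt t x) hc)] with p hp
    simpa [Metric.mem_closedBall, dist_eq_norm] using hp
  obtain ⟨U, hU, V, hV, hUV⟩ := mem_nhds_prod_iff.mp h1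
  have hW : U ∩ Set.Ioo (0:ℝ) 1 ∩ G ⁻¹' V ∈ nhds t := by
    refine Filter.inter_mem (Filter.inter_mem hU ?_) (hG (hGt ▸ hV))
    exact isOpen_Ioo.mem_nhds ht
  obtain ⟨ε, hε, hball⟩ := Metric.mem_nhds_iff.mp hW
  filter_upwards [Metric.ball_mem_nhds t hε] with τ hτ
  have htb : t ∈ Metric.ball t ε := Metric.mem_ball_self hε
  have hτV : G τ ∈ V := (hball hτ).2
  have key : ‖(w τ (G τ) - τ * wt t x) - (w t (G τ) - t * wt t x)‖ ≤ c * ‖τ - t‖ := by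
    refine Convex.norm_image_sub_le_of_norm_hasDerivWithin_le
      (f := fun σ => w σ (G τ) - σ * wt t x) (f' := fun σ => wt σ (G τ) - wt t x)
      (fun σ hσ => ?_) (fun σ hσ => ?_) (convex_ball t ε) htb hτ
    · exact ((hwt σ (hball hσ).1.2 (G τ)).sub (hasDerivAt_mul_const (wt t x))).hasDerivWithinAt
    · exact hUV (Set.mk_mem_prod (hball hσ).1.1 hτV)
  calc ‖w τ (G τ) - w t (G τ) - (w t (G t) - w t (G t)) - (τ - t) • wt t x‖
      = ‖(w τ (G τ) - τ * wt t x) - (w t (G τ) - t * wt t x)‖ := by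
        rw [smul_eq_mul]; ring_nf
    _ ≤ c * ‖τ - t‖ := key

/-- Let `J` be an open interval and `g` on `(0,1) × J` twice continuously differentiable
with `∂_y g > 0`, satisfying `∂ₜg + ∂_{yy}g/(2(∂_y g)²) = 0`. Let `w` on `(0,1) × ℝ` be
twice continuously differentiable with `w(t, g(t,y)) = y` for all `(t,y)`. Then at every
point `x = g(t,y)`, `w` satisfies the backward heat equation `∂ₜw + (1/2)∂_{xx}w = 0`. -/
theorem stmt13 (J : Set ℝ) (hJopen : IsOpen J) (hJconv : Convex ℝ J)
    (g gt gy gyy : ℝ → ℝ → ℝ)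
    (hgt : ∀ t ∈ Set.Ioo (0:ℝ) 1, ∀ y ∈ J, HasDerivAt (fun τ => g τ y) (gt t y) t)
    (hgy : ∀ t ∈ Set.Ioo (0:ℝ) 1, ∀ y ∈ J, HasDerivAt (fun y' => g t y') (gy t y) y)
    (hgyy : ∀ t ∈ Set.Ioo (0:ℝ) 1, ∀ y ∈ J, HasDerivAt (fun y' => gy t y') (gyy t y) y)
    (hgtc : ContinuousOn (fun p : ℝ × ℝ => gt p.1 p.2) (Set.Ioo (0:ℝ) 1 ×ˢ J))
    (hgyc : ContinuousOn (fun p : ℝ × ℝ => gy p.1 p.2) (Set.Ioo (0:ℝ) 1 ×ˢ J))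
    (hgyyc : ContinuousOn (fun p : ℝ × ℝ => gyy p.1 p.2) (Set.Ioo (0:ℝ) 1 ×ˢ J))
    (hgypos : ∀ t ∈ Set.Ioo (0:ℝ) 1, ∀ y ∈ J, 0 < gy t y)
    (hgpde : ∀ t ∈ Set.Ioo (0:ℝ) 1, ∀ y ∈ J,
      gt t y + gyy t y / (2 * (gy t y) ^ 2) = 0)
    (w wt wx wxx : ℝ → ℝ → ℝ)
    (hwt : ∀ t ∈ Set.Ioo (0:ℝ) 1, ∀ x : ℝ, HasDerivAt (fun τ => w τ x) (wt t x) t)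
    (hwx : ∀ t ∈ Set.Ioo (0:ℝ) 1, ∀ x : ℝ, HasDerivAt (fun x' => w t x') (wx t x) x)
    (hwxx : ∀ t ∈ Set.Ioo (0:ℝ) 1, ∀ x : ℝ, HasDerivAt (fun x' => wx t x') (wxx t x) x)
    (hwtc : ContinuousOn (fun p : ℝ × ℝ => wt p.1 p.2) (Set.Ioo (0:ℝ) 1 ×ˢ Set.univ))
    (hwxc : ContinuousOn (fun p : ℝ × ℝ => wx p.1 p.2) (Set.Ioo (0:ℝ) 1 ×ˢ Set.univ))
    (hwxxc : ContinuousOn (fun p : ℝ × ℝ => wxx p.1 p.2) (Set.Ioo (0:ℝ) 1 ×ˢ Set.univ))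
    (hinv : ∀ t ∈ Set.Ioo (0:ℝ) 1, ∀ y ∈ J, w t (g t y) = y) :
    ∀ t ∈ Set.Ioo (0:ℝ) 1, ∀ y ∈ J,
      wt t (g t y) + (1 / 2) * wxx t (g t y) = 0 := by
  intro t ht y hy
  have hgy0 : ∀ y' ∈ J, gy t y' ≠ 0 := fun y' hy' => (hgypos t ht y' hy').ne'
  -- First spatial derivative identity: wx t (g t y') * gy t y' = 1 on J
  have hfirst : ∀ y' ∈ J, wx t (g t y') * gy t y' = 1 := by
    intro y' hy'
    have h1 : HasDerivAt (fun z => w t (g t z)) (wx t (g t y') * gy t y') y' :=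
      (hwx t ht (g t y')).comp y' (hgy t ht y' hy')
    have h2 : HasDerivAt (fun z => w t (g t z)) 1 y' := by
      refine (hasDerivAt_id y').congr_of_eventuallyEq ?_
      filter_upwards [hJopen.mem_nhds hy'] with z hz
      exact hinv t ht z hz
    exact h1.unique h2
  have hwxval : ∀ y' ∈ J, wx t (g t y') = (gy t y')⁻¹ := fun y' hy' =>
    eq_inv_of_mul_eq_one_left (hfirst y' hy')
  -- Second spatial derivative
  have h3 : HasDerivAt (fun z => wx t (g t z)) (wxx t (g t y) * gy t y) y :=
    (hwxx t ht (g t y)).comp y (hgy t ht y hy)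
  have h4 : HasDerivAt (fun z => (gy t z)⁻¹) (-(gyy t y) / (gy t y) ^ 2) y :=
    (hgyy t ht y hy).inv (hgy0 y hy)
  have h5 : HasDerivAt (fun z => wx t (g t z)) (-(gyy t y) / (gy t y) ^ 2) y := by
    refine h4.congr_of_eventuallyEq ?_
    filter_upwards [hJopen.mem_nhds hy] with z hz
    exact hwxval z hz
  have e2 : wxx t (g t y) * gy t y = -(gyy t y) / (gy t y) ^ 2 := h3.unique h5
  -- Time derivative
  have hwtcA : ContinuousAt (fun p : ℝ × ℝ => wt p.1 p.2) (t, g t y) :=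
    hwtc.continuousAt ((isOpen_Ioo.prod isOpen_univ).mem_nhds ⟨ht, mem_univ _⟩)
  have hA : HasDerivAt (fun τ => w τ (g τ y) - w t (g τ y)) (wt t (g t y)) t :=
    aux_t_deriv w wt t (g t y) ht hwt hwtcA (fun τ => g τ y)
      (hgt t ht y hy).continuousAt rfl
  have hB : HasDerivAt (fun τ => w t (g τ y)) (wx t (g t y) * gt t y) t :=
    (hwx t ht (g t y)).comp t (hgt t ht y hy)
  have hC : HasDerivAt (fun τ => w τ (g τ y))
      (wt t (g t y) + wx t (g t y) * gt t y) t := by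
    have := hA.add hB
    refine this.congr_of_eventuallyEq (Filter.Eventually.of_forall fun τ => ?_)
    simp
  have hE : HasDerivAt (fun τ => w τ (g τ y)) 0 t := by
    refine (hasDerivAt_const t y).congr_of_eventuallyEq ?_
    filter_upwards [isOpen_Ioo.mem_nhds ht] with τ hτ
    exact hinv τ hτ y hy
  have e3 : wt t (g t y) + wx t (g t y) * gt t y = 0 := hC.unique hE
  -- Algebra
  have e1 : wx t (g t y) = (gy t y)⁻¹ := hwxval y hy
  have e4 : gt t y + gyy t y / (2 * (gy t y) ^ 2) = 0 := hgpde t ht y hy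
  have hne : gy t y ≠ 0 := hgy0 y hy
  have hwxxv : wxx t (g t y) = -(gyy t y) / gy t y ^ 3 := by
    field_simp at e2 ⊢
    nlinarith [e2, sq_nonneg (gy t y)]
  have hwtv : wt t (g t y) = -(gt t y) / gy t y := by
    rw [e1] at e3
    field_simp at e3 ⊢
    linarith
  rw [hwtv, hwxxv]
  have hgtv : gt t y = -(gyy t y) / (2 * (gy t y) ^ 2) := by
    field_simp at e4 ⊢; linarith
  rw [hgtv]
  field_simp
  ring
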